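/- arXiv:1307.4281 — 2 statements merged into one kernel-verified Lean document; each statement's English description precedes it below -/
import Mathlib

section
/- If A is an n×n Hermitian matrix over the real quaternions ℍ, then all of its row determinants and all of its column determinants coincide, i.e. rdet_1 A = ⋯ = rdet_n A = cdet_1 A = ⋯ = cdet_n A, and this common value is a real number. -/
open Quaternion Matrix Finset

noncomputable section

/-- Ordered product of the entries of `A` along the cycle of `σ` containing `x`,
starting at `x`:  `a_{x,σx} · a_{σx,σ²x} ⋯ a_{σ^{c-1}x,x}`. -/
def cycProd {n : ℕ} (A : Matrix (Fin n) (Fin n) ℍ[ℝ]) (σ : Equiv.Perm (Fin n))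
    (x : Fin n) : ℍ[ℝ] :=
  ((List.range (Function.minimalPeriod (⇑σ) x)).map
    (fun t => A ((⇑σ)^[t] x) ((⇑σ)^[t + 1] x))).prod

/-- `x` is the smallest element of its `σ`-cycle. -/
def isLeaderB {n : ℕ} (σ : Equiv.Perm (Fin n)) (x : Fin n) : Bool :=
  (List.range n).all fun t => decide (x ≤ (⇑σ)^[t] x)

/-- `x` lies in the `σ`-cycle of `i`. -/
def inCycleB {n : ℕ} (σ : Equiv.Perm (Fin n)) (i x : Fin n) : Bool :=
  (List.range n).any fun t => decide ((⇑σ)^[t] i = x)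

/-- The increasing list of the smallest elements of the `σ`-cycles other than
the cycle of `i`. -/
def leaders {n : ℕ} (σ : Equiv.Perm (Fin n)) (i : Fin n) : List (Fin n) :=
  (List.finRange n).filter fun x => isLeaderB σ x && !(inCycleB σ i x)

/-- The `i`-th row determinant of a quaternion matrix: the sum over all
permutations, written in left-ordered cycle notation (the cycle of `i` first,
starting with `i`; every other cycle starting with its smallest element, these
smallest elements increasing from left to right), of the sign times the ordered
product of the corresponding entries. -/
def rdet {n : ℕ} (A : Matrix (Fin n) (Fin n) ℍ[ℝ]) (i : Fin n) : ℍ[ℝ] :=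
  ∑ σ : Equiv.Perm (Fin n),
    ((Equiv.Perm.sign σ : ℤ) : ℍ[ℝ]) *
      (cycProd A σ i * ((leaders σ i).map (cycProd A σ)).prod)

/-- The `j`-th column determinant of a quaternion matrix: the sum over all
permutations, written in right-ordered cycle notation (the cycle of `j` last,
ending with `j`; every other cycle ending with its smallest element, these
smallest elements increasing from right to left), of the sign times the ordered
product of the corresponding entries. -/
def cdet {n : ℕ} (A : Matrix (Fin n) (Fin n) ℍ[ℝ]) (j : Fin n) : ℍ[ℝ] :=
  ∑ τ : Equiv.Perm (Fin n),
    ((Equiv.Perm.sign τ : ℤ) : ℍ[ℝ]) *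
      ((((leaders τ j).reverse).map (cycProd A τ)).prod * cycProd A τ j)

/-- The determinant of a (Hermitian) quaternion matrix: the common value of all
row and column determinants. -/
def Hdet : {m : ℕ} → Matrix (Fin m) (Fin m) ℍ[ℝ] → ℍ[ℝ]
  | 0, _ => 1
  | _ + 1, A => rdet A 0

/-- The principal submatrix of `M` with rows and columns indexed by `β`. -/
def principalSub {n : ℕ} (M : Matrix (Fin n) (Fin n) ℍ[ℝ]) (β : Finset (Fin n)) :
    Matrix (Fin β.card) (Fin β.card) ℍ[ℝ] :=
  M.submatrix (⇑(β.orderEmbOfFin rfl)) (⇑(β.orderEmbOfFin rfl))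

/-- The position of `i` inside the increasing enumeration of the finset `β`. -/
def posIn {n : ℕ} (β : Finset (Fin n)) {i : Fin n} (h : i ∈ β) : Fin β.card :=
  (β.orderIsoOfFin rfl).symm ⟨i, h⟩

/-- `Σ_{β ∈ J_{s,n}{i}} cdet_i (M_β^β)`: the sum, over all subsets `β` of
cardinality `s` containing `i`, of the column determinants of the principal
submatrix `M_β^β` taken at the position of `i` within `β`. -/
def cdetPM {n : ℕ} (M : Matrix (Fin n) (Fin n) ℍ[ℝ]) (s : ℕ) (i : Fin n) : ℍ[ℝ] :=
  ∑ β ∈ ((Finset.powersetCard s (Finset.univ : Finset (Fin n))).filter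
      fun β => i ∈ β).attach,
    cdet (principalSub M β.1) (posIn β.1 (Finset.mem_filter.mp β.2).2)

/-- `Σ_{α ∈ I_{s,n}{j}} rdet_j (M_α^α)`: the sum, over all subsets `α` of
cardinality `s` containing `j`, of the row determinants of the principal
submatrix `M_α^α` taken at the position of `j` within `α`. -/
def rdetPM {n : ℕ} (M : Matrix (Fin n) (Fin n) ℍ[ℝ]) (s : ℕ) (j : Fin n) : ℍ[ℝ] :=
  ∑ α ∈ ((Finset.powersetCard s (Finset.univ : Finset (Fin n))).filter
      fun α => j ∈ α).attach,
    rdet (principalSub M α.1) (posIn α.1 (Finset.mem_filter.mp α.2).2)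

/-- The sum of all principal minors of `M` of order `r`. -/
def minorSum {n : ℕ} (M : Matrix (Fin n) (Fin n) ℍ[ℝ]) (r : ℕ) : ℍ[ℝ] :=
  ∑ β ∈ Finset.powersetCard r (Finset.univ : Finset (Fin n)),
    Hdet (principalSub M β)

/-- The (column) rank of a quaternion matrix: the dimension of the span of its
columns as a right `ℍ`-vector space. -/
def qrank {m n : ℕ} (A : Matrix (Fin m) (Fin n) ℍ[ℝ]) : ℕ :=
  Module.finrank ℍ[ℝ]ᵐᵒᵖ
    (Submodule.span ℍ[ℝ]ᵐᵒᵖ (Set.range Aᵀ) : Submodule ℍ[ℝ]ᵐᵒᵖ (Fin m → ℍ[ℝ]))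

/-- `Ind A = k`: `k` is the smallest nonnegative integer with
`rank A^(k+1) = rank A^k`. -/
def isInd {n : ℕ} (A : Matrix (Fin n) (Fin n) ℍ[ℝ]) (k : ℕ) : Prop :=
  qrank (A ^ (k + 1)) = qrank (A ^ k) ∧
    ∀ l < k, qrank (A ^ (l + 1)) ≠ qrank (A ^ l)

/-- `X` is a Drazin inverse of `A` (relative to the index `k`). -/
def isDrazin {n : ℕ} (A X : Matrix (Fin n) (Fin n) ℍ[ℝ]) (k : ℕ) : Prop :=
  A ^ (k + 1) * X = A ^ k ∧ X * A * X = X ∧ A * X = X * A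

end


namespace Stmt0Aux
open Equiv Function

variable {n : ℕ}


variable {n : ℕ}

lemma self_star_eq_re (a : ℍ[ℝ]) (h : star a = a) : a = ((a.re : ℝ) : ℍ[ℝ]) := by
  have h1 := congrArg QuaternionAlgebra.imI h
  have h2 := congrArg QuaternionAlgebra.imJ h
  have h3 := congrArg QuaternionAlgebra.imK h
  simp at h1 h2 h3
  ext <;> simp <;> linarith

lemma re_mul_comm (a b : ℍ[ℝ]) : (a * b).re = (b * a).re := by
  simp [Quaternion.re_mul]; ring

lemma iter_pow (σ : Perm (Fin n)) (t : ℕ) (x : Fin n) : (⇑σ)^[t] x = (σ ^ t) x := by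
  rw [Equiv.Perm.iterate_eq_pow]

lemma mem_periodicPts (σ : Perm (Fin n)) (x : Fin n) : x ∈ periodicPts ⇑σ := by
  refine ⟨orderOf σ, orderOf_pos σ, ?_⟩
  unfold IsPeriodicPt IsFixedPt
  rw [iter_pow, pow_orderOf_eq_one]; rfl

lemma mp_pos (σ : Perm (Fin n)) (x : Fin n) : 0 < minimalPeriod ⇑σ x :=
  minimalPeriod_pos_of_mem_periodicPts (mem_periodicPts σ x)

/-- The orbit of `x` under `σ` as a finset. -/
noncomputable def O (σ : Perm (Fin n)) (x : Fin n) : Finset (Fin n) :=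
  (Finset.range (minimalPeriod ⇑σ x)).image (fun t => (⇑σ)^[t] x)

lemma card_O (σ : Perm (Fin n)) (x : Fin n) : (O σ x).card = minimalPeriod ⇑σ x := by
  rw [O, Finset.card_image_of_injOn, Finset.card_range]
  intro a ha b hb hab
  exact iterate_injOn_Iio_minimalPeriod (Finset.mem_range.mp ha) (Finset.mem_range.mp hb) hab

lemma mp_le (σ : Perm (Fin n)) (x : Fin n) : minimalPeriod ⇑σ x ≤ n := by
  rw [← card_O]
  simpa using Finset.card_le_card (Finset.subset_univ (O σ x))

lemma mem_O_iff {σ : Perm (Fin n)} {x y : Fin n} : y ∈ O σ x ↔ ∃ t, (⇑σ)^[t] x = y := by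
  constructor
  · rintro h; rw [O, Finset.mem_image] at h; obtain ⟨t, _, ht⟩ := h; exact ⟨t, ht⟩
  · rintro ⟨t, ht⟩
    rw [O, Finset.mem_image]
    exact ⟨t % minimalPeriod ⇑σ x, Finset.mem_range.mpr (Nat.mod_lt _ (mp_pos σ x)),
      by rw [iterate_mod_minimalPeriod_eq]; exact ht⟩

lemma mem_O_iff_lt {σ : Perm (Fin n)} {x y : Fin n} : y ∈ O σ x ↔ ∃ t < n, (⇑σ)^[t] x = y := by
  rw [mem_O_iff]
  constructor
  · rintro ⟨t, ht⟩
    exact ⟨t % minimalPeriod ⇑σ x, lt_of_lt_of_le (Nat.mod_lt _ (mp_pos σ x)) (mp_le σ x),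
      by rw [iterate_mod_minimalPeriod_eq]; exact ht⟩
  · rintro ⟨t, _, ht⟩; exact ⟨t, ht⟩

lemma self_mem_O (σ : Perm (Fin n)) (x : Fin n) : x ∈ O σ x := mem_O_iff.mpr ⟨0, rfl⟩

lemma iterate_mem_O (σ : Perm (Fin n)) (x : Fin n) (t : ℕ) : (⇑σ)^[t] x ∈ O σ x :=
  mem_O_iff.mpr ⟨t, rfl⟩

lemma apply_mem_O {σ : Perm (Fin n)} {x y : Fin n} (h : y ∈ O σ x) : σ y ∈ O σ x := by
  obtain ⟨t, ht⟩ := mem_O_iff.mp h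
  exact mem_O_iff.mpr ⟨t + 1, by rw [iterate_succ_apply', ht]⟩

lemma iterate_inv_iterate (σ : Perm (Fin n)) (k : ℕ) (x : Fin n) :
    (⇑σ⁻¹)^[k] ((⇑σ)^[k] x) = x := by
  rw [iter_pow, iter_pow, inv_pow]; exact Equiv.symm_apply_apply _ _

lemma O_inv_subset (σ : Perm (Fin n)) (x : Fin n) : O σ x ⊆ O σ⁻¹ x := by
  intro y hy
  obtain ⟨t, _, ht⟩ := mem_O_iff_lt.mp hy
  set m := minimalPeriod ⇑σ x with hm
  refine mem_O_iff.mpr ⟨m - t % m, ?_⟩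
  have h1 : (⇑σ)^[m] x = x := iterate_minimalPeriod
  have h2 : (⇑σ)^[t % m] x = y := by rw [iterate_mod_minimalPeriod_eq]; exact ht
  have hlt : t % m < m := Nat.mod_lt _ (mp_pos σ x)
  have : (⇑σ)^[m - t % m] y = x := by
    rw [← h2, ← iterate_add_apply, Nat.sub_add_cancel hlt.le, h1]
  rw [← this, iterate_inv_iterate]

lemma O_inv (σ : Perm (Fin n)) (x : Fin n) : O σ⁻¹ x = O σ x := by
  refine le_antisymm ?_ (O_inv_subset σ x)
  have := O_inv_subset σ⁻¹ x
  rwa [inv_inv] at this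

lemma mp_inv (σ : Perm (Fin n)) (x : Fin n) :
    minimalPeriod ⇑σ⁻¹ x = minimalPeriod ⇑σ x := by
  rw [← card_O, ← card_O, O_inv]


open Equiv Function
variable {n : ℕ}

-- (chunk 1 assumed; here restated as axioms for speed of testing)
lemma revprod (m : ℕ) (f : ℕ → ℍ[ℝ]) :
    star (((List.range m).map f).prod) =
      ((List.range m).map (fun s => star (f (m - 1 - s)))).prod := by
  induction m with
  | zero => simp
  | succ m ih =>
    conv_lhs => rw [List.range_succ]
    conv_rhs => rw [List.range_succ_eq_map]
    rw [List.map_append, List.prod_append, List.map_cons, List.prod_cons, StarMul.star_mul]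
    simp only [List.map_singleton, List.prod_singleton, Nat.add_sub_cancel, List.map_map]
    rw [ih]
    congr 2
    · simp
    · rw [List.map_map]
      apply List.map_congr_left
      intro a _
      simp only [Function.comp_apply, Nat.succ_eq_add_one]
      congr 2
      omega

lemma mp_congr {σ σ' : Perm (Fin n)} {x : Fin n}
    (h : ∀ t, (⇑σ)^[t] x = (⇑σ')^[t] x) :
    minimalPeriod ⇑σ x = minimalPeriod ⇑σ' x := by
  rw [minimalPeriod_eq_minimalPeriod_iff]
  intro k
  unfold IsPeriodicPt IsFixedPt
  rw [h k]

lemma cycProd_congr (A : Matrix (Fin n) (Fin n) ℍ[ℝ]) {σ σ' : Perm (Fin n)} {x : Fin n}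
    (h : ∀ t, (⇑σ)^[t] x = (⇑σ')^[t] x) :
    cycProd A σ x = cycProd A σ' x := by
  unfold cycProd
  rw [mp_congr h]
  congr 1
  apply List.map_congr_left
  intro t _
  rw [h t, h (t+1)]

lemma star_cycProd (A : Matrix (Fin n) (Fin n) ℍ[ℝ]) (hA : A.IsHermitian)
    (σ : Perm (Fin n)) (x : Fin n) :
    star (cycProd A σ x) = cycProd A σ⁻¹ x := by
  unfold cycProd
  rw [revprod, mp_inv]
  congr 1
  apply List.map_congr_left
  intro s hs
  rw [List.mem_range] at hs
  set m := minimalPeriod ⇑σ x with hm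
  have key : ∀ k, k ≤ m → (⇑σ⁻¹)^[k] x = (⇑σ)^[m - k] x := by
    intro k hk
    have h1 : (⇑σ)^[k] ((⇑σ)^[m-k] x) = x := by
      rw [← Function.iterate_add_apply, Nat.add_sub_cancel' hk]
      exact iterate_minimalPeriod
    calc (⇑σ⁻¹)^[k] x = (⇑σ⁻¹)^[k] ((⇑σ)^[k] ((⇑σ)^[m-k] x)) := by rw [h1]
      _ = (⇑σ)^[m-k] x := iterate_inv_iterate σ k _
  have e1 : m - 1 - s + 1 = m - s := by omega
  have e2 : m - 1 - s = m - (s+1) := by omega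
  rw [key s hs.le, key (s+1) hs, e1, e2, hA.apply]

open Equiv Function
variable {n : ℕ}

lemma re_sum {ι : Type*} (s : Finset ι) (f : ι → ℍ[ℝ]) :
    (∑ i ∈ s, f i).re = ∑ i ∈ s, (f i).re :=
  map_sum (⟨⟨QuaternionAlgebra.re, rfl⟩, fun _ _ => rfl⟩ : ℍ[ℝ] →+ ℝ) f s

lemma rot (m k : ℕ) (hk : k ≤ m) (f : ℕ → ℍ[ℝ]) (hper : ∀ t, f (t + m) = f t) :
    ((List.range m).map (fun t => f (t + k))).prod =
      ((List.range (m - k)).map (fun t => f (t + k))).prod * ((List.range k).map f).prod ∧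
    ((List.range m).map f).prod =
      ((List.range k).map f).prod * ((List.range (m - k)).map (fun t => f (t + k))).prod := by
  constructor
  · conv_lhs => rw [show m = (m - k) + k by omega, List.range_add]
    rw [List.map_append, List.prod_append, List.map_map]
    congr 1
    congr 1
    apply List.map_congr_left
    intro a _
    simp only [Function.comp_apply]
    rw [show m - k + a + k = a + m by omega, hper]
  · conv_lhs => rw [show m = k + (m - k) by omega, List.range_add]
    rw [List.map_append, List.prod_append, List.map_map]
    congr 1
    congr 1
    apply List.map_congr_left
    intro a _
    simp only [Function.comp_apply]
    congr 1
    omega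

lemma re_cycProd_iterate (A : Matrix (Fin n) (Fin n) ℍ[ℝ]) (c : Perm (Fin n))
    (x : Fin n) (k : ℕ) :
    (cycProd A c ((⇑c)^[k] x)).re = (cycProd A c x).re := by
  set m := minimalPeriod ⇑c x with hm
  set k' := k % m with hk'
  have hy : (⇑c)^[k] x = (⇑c)^[k'] x := (iterate_mod_minimalPeriod_eq).symm
  have hmp : minimalPeriod ⇑c ((⇑c)^[k] x) = m :=
    minimalPeriod_apply_iterate (mem_periodicPts c x) k
  set F : ℕ → ℍ[ℝ] := fun t => A ((⇑c)^[t] x) ((⇑c)^[t+1] x) with hF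
  have hper : ∀ t, F (t + m) = F t := by
    intro t
    simp only [hF]
    rw [iterate_add_minimalPeriod_eq, show t + m + 1 = (t + 1) + m by omega,
      iterate_add_minimalPeriod_eq]
  have hk'le : k' ≤ m := (Nat.mod_lt _ (mp_pos c x)).le
  obtain ⟨h1, h2⟩ := rot m k' hk'le F hper
  have e1 : cycProd A c ((⇑c)^[k] x) = ((List.range m).map (fun t => F (t + k'))).prod := by
    unfold cycProd
    rw [hmp]
    congr 1
    apply List.map_congr_left
    intro t _
    simp only [hF]
    rw [hy, ← Function.iterate_add_apply, ← Function.iterate_add_apply,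
      show t + 1 + k' = t + k' + 1 from by omega]
  have e2 : cycProd A c x = ((List.range m).map F).prod := rfl
  rw [e1, e2, h1, h2, re_mul_comm]

noncomputable def sgn (σ : Perm (Fin n)) : ℍ[ℝ] := ((Equiv.Perm.sign σ : ℤ) : ℍ[ℝ])

lemma star_sgn (σ : Perm (Fin n)) : star (sgn σ) = sgn σ := by
  unfold sgn; exact star_intCast _

lemma sgn_inv (σ : Perm (Fin n)) : sgn σ⁻¹ = sgn σ := by unfold sgn; simp

lemma sgn_comm (σ : Perm (Fin n)) (q : ℍ[ℝ]) : sgn σ * q = q * sgn σ :=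
  (Int.cast_commute _ q).eq

lemma sgn_mul_re (σ : Perm (Fin n)) (q : ℍ[ℝ]) :
    (sgn σ * q).re = ((Equiv.Perm.sign σ : ℤ) : ℝ) * q.re := by
  unfold sgn
  simp [Quaternion.re_mul]

noncomputable def CycF (B : Finset (Fin n)) : Finset (Perm (Fin n)) :=
  univ.filter (fun c => (∀ y, y ∉ B → c y = y) ∧ ∀ x ∈ B, O c x = B)

lemma mem_CycF {B : Finset (Fin n)} {c : Perm (Fin n)} :
    c ∈ CycF B ↔ (∀ y, y ∉ B → c y = y) ∧ ∀ x ∈ B, O c x = B := by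
  unfold CycF; simp

lemma inv_mem_CycF {B : Finset (Fin n)} {c : Perm (Fin n)} (h : c ∈ CycF B) :
    c⁻¹ ∈ CycF B := by
  rw [mem_CycF] at h ⊢
  exact ⟨fun y hy => by rw [Equiv.Perm.inv_eq_iff_eq]; exact (h.1 y hy).symm,
    fun x hx => by rw [O_inv]; exact h.2 x hx⟩

noncomputable def TsF (A : Matrix (Fin n) (Fin n) ℍ[ℝ]) (B : Finset (Fin n)) (x : Fin n) :
    ℍ[ℝ] := ∑ c ∈ CycF B, sgn c * cycProd A c x

lemma star_TsF (A : Matrix (Fin n) (Fin n) ℍ[ℝ]) (hA : A.IsHermitian)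
    (B : Finset (Fin n)) (x : Fin n) : star (TsF A B x) = TsF A B x := by
  unfold TsF
  rw [star_sum]
  refine Finset.sum_nbij' (fun c => c⁻¹) (fun c => c⁻¹) ?_ ?_ ?_ ?_ ?_
  · intro c hc; exact inv_mem_CycF hc
  · intro c hc; exact inv_mem_CycF hc
  · intro c _; simp
  · intro c _; simp
  · intro c _
    rw [StarMul.star_mul, star_sgn, star_cycProd A hA, ← sgn_comm, sgn_inv]

lemma TsF_base (A : Matrix (Fin n) (Fin n) ℍ[ℝ]) (hA : A.IsHermitian)
    {B : Finset (Fin n)} {x y : Fin n} (hx : x ∈ B) (hy : y ∈ B) :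
    TsF A B x = TsF A B y := by
  have hsx := star_TsF A hA B x
  have hsy := star_TsF A hA B y
  have hre : (TsF A B x).re = (TsF A B y).re := by
    unfold TsF
    rw [re_sum, re_sum]
    apply Finset.sum_congr rfl
    intro c hc
    rw [sgn_mul_re, sgn_mul_re]
    congr 1
    have hyO : y ∈ O c x := by rw [(mem_CycF.mp hc).2 x hx]; exact hy
    obtain ⟨k, hk⟩ := mem_O_iff.mp hyO
    rw [← hk, re_cycProd_iterate]
  rw [self_star_eq_re _ hsx, self_star_eq_re _ hsy, hre]

lemma TsF_def (A : Matrix (Fin n) (Fin n) ℍ[ℝ]) (B : Finset (Fin n)) (x : Fin n) :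
    TsF A B x = ∑ c ∈ CycF B, sgn c * cycProd A c x := rfl

lemma sgn_mul (a b : Perm (Fin n)) : sgn (a * b) = sgn a * sgn b := by
  unfold sgn
  rw [_root_.map_mul]
  push_cast
  ring

lemma sgn_one : sgn (1 : Perm (Fin n)) = 1 := by
  unfold sgn
  simp

open Equiv Function
variable {n : ℕ}



lemma O_congr {σ σ' : Perm (Fin n)} {x : Fin n}
    (h : ∀ t, (⇑σ)^[t] x = (⇑σ')^[t] x) : O σ x = O σ' x := by
  ext y
  rw [mem_O_iff, mem_O_iff]
  exact ⟨fun ⟨t, ht⟩ => ⟨t, by rw [← h t]; exact ht⟩,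
    fun ⟨t, ht⟩ => ⟨t, by rw [h t]; exact ht⟩⟩

lemma O_basechange {σ : Perm (Fin n)} {i x : Fin n} (h : x ∈ O σ i) :
    O σ x = O σ i := by
  obtain ⟨k, hk⟩ := mem_O_iff.mp h
  apply Finset.eq_of_subset_of_card_le
  · intro y hy
    obtain ⟨t, ht⟩ := mem_O_iff.mp hy
    exact mem_O_iff.mpr ⟨t + k, by rw [Function.iterate_add_apply, hk]; exact ht⟩
  · rw [card_O, card_O, ← hk, minimalPeriod_apply_iterate (mem_periodicPts σ i)]

lemma iter_mem_O_of_mem {σ : Perm (Fin n)} {i x : Fin n} (h : x ∈ O σ i) (t : ℕ) :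
    (⇑σ)^[t] x ∈ O σ i := O_basechange h ▸ iterate_mem_O σ x t

section fixes
variable {σ : Perm (Fin n)} {T : Finset (Fin n)}

lemma fixes_mapsTo (h : ∀ y, y ∉ T → σ y = y) {y : Fin n} (hy : y ∈ T) : σ y ∈ T := by
  by_contra hc
  have h2 := σ.injective (h _ hc)
  rw [← h2] at hy
  exact hc hy

lemma fixes_iter (h : ∀ y, y ∉ T → σ y = y) {y : Fin n} (hy : y ∉ T) (t : ℕ) :
    (⇑σ)^[t] y = y := by
  induction t with
  | zero => rfl
  | succ t ih => rw [iterate_succ_apply', ih, h _ hy]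

lemma mapsTo_iter (h : ∀ y, y ∉ T → σ y = y) {y : Fin n} (hy : y ∈ T) (t : ℕ) :
    (⇑σ)^[t] y ∈ T := by
  induction t with
  | zero => exact hy
  | succ t ih => rw [iterate_succ_apply']; exact fixes_mapsTo h ih

lemma not_mem_iter (h : ∀ y, y ∉ T → σ y ∉ T) {y : Fin n} (hy : y ∉ T) (t : ℕ) :
    (⇑σ)^[t] y ∉ T := by
  induction t with
  | zero => exact hy
  | succ t ih => rw [iterate_succ_apply']; exact h _ ih
end fixes

section mulIter
variable {B : Finset (Fin n)} {c τ : Perm (Fin n)}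

lemma mul_iter_mem (hc : ∀ y, y ∉ B → c y = y) (hτ : ∀ y ∈ B, τ y = y)
    {x : Fin n} (hx : x ∈ B) (t : ℕ) : (⇑(c * τ))^[t] x = (⇑c)^[t] x := by
  induction t with
  | zero => rfl
  | succ t ih =>
      rw [iterate_succ_apply', iterate_succ_apply', ih]
      show c (τ _) = _
      rw [hτ _ (mapsTo_iter hc hx t)]

lemma mul_iter_not_mem (hc : ∀ y, y ∉ B → c y = y) (hτ' : ∀ y, y ∉ B → τ y ∉ B)
    {x : Fin n} (hx : x ∉ B) (t : ℕ) : (⇑(c * τ))^[t] x = (⇑τ)^[t] x := by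
  induction t with
  | zero => rfl
  | succ t ih =>
      rw [iterate_succ_apply', iterate_succ_apply', ih]
      show c (τ _) = _
      rw [hc _ (hτ' _ (not_mem_iter hτ' hx t))]
end mulIter

noncomputable def PermsOn (S : Finset (Fin n)) : Finset (Perm (Fin n)) :=
  univ.filter (fun τ => ∀ y, y ∉ S → τ y = y)

lemma mem_PermsOn {S : Finset (Fin n)} {τ : Perm (Fin n)} :
    τ ∈ PermsOn S ↔ ∀ y, y ∉ S → τ y = y := by unfold PermsOn; simp

lemma sameCycle_iff_mem_O {σ : Perm (Fin n)} {i y : Fin n} :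
    σ.SameCycle i y ↔ y ∈ O σ i := by
  constructor
  · intro h
    obtain ⟨j, _, _, hj⟩ := Equiv.Perm.SameCycle.exists_pow_eq σ h
    exact mem_O_iff.mpr ⟨j, by rw [iter_pow]; exact hj⟩
  · intro h
    obtain ⟨t, ht⟩ := mem_O_iff.mp h
    exact ⟨(t : ℤ), by rw [zpow_natCast, ← iter_pow σ t i]; exact ht⟩

lemma cycleOf_apply_mem {σ : Perm (Fin n)} {i y : Fin n} (hy : y ∈ O σ i) :
    σ.cycleOf i y = σ y :=
  Equiv.Perm.SameCycle.cycleOf_apply (sameCycle_iff_mem_O.mpr hy)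

lemma cycleOf_apply_not_mem {σ : Perm (Fin n)} {i y : Fin n} (hy : y ∉ O σ i) :
    σ.cycleOf i y = y :=
  Equiv.Perm.cycleOf_apply_of_not_sameCycle (fun hs => hy (sameCycle_iff_mem_O.mp hs))

lemma cycleOf_iter {σ : Perm (Fin n)} {i x : Fin n} (hx : x ∈ O σ i) (t : ℕ) :
    (⇑(σ.cycleOf i))^[t] x = (⇑σ)^[t] x := by
  induction t with
  | zero => rfl
  | succ t ih =>
    rw [iterate_succ_apply', iterate_succ_apply', ih]
    exact cycleOf_apply_mem (iter_mem_O_of_mem hx t)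

lemma cycleOf_mem_CycF (σ : Perm (Fin n)) (i : Fin n) : σ.cycleOf i ∈ CycF (O σ i) := by
  rw [mem_CycF]
  refine ⟨fun y hy => cycleOf_apply_not_mem hy, fun x hx => ?_⟩
  rw [O_congr (cycleOf_iter hx)]
  exact O_basechange hx

lemma inv_cycleOf_mul_mem (S : Finset (Fin n)) {σ : Perm (Fin n)} (hσ : σ ∈ PermsOn S)
    (i : Fin n) : (σ.cycleOf i)⁻¹ * σ ∈ PermsOn (S \ O σ i) := by
  rw [mem_PermsOn] at hσ ⊢
  intro y hy
  rw [Finset.mem_sdiff, not_and_or, not_not] at hy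
  show (σ.cycleOf i)⁻¹ (σ y) = y
  rcases hy with hy | hy
  · -- y ∉ S : σ y = y and y not in orbit (orbit ⊆ S… need) — handle: σ y = y, cycleOf fixes y
    have h1 : σ y = y := hσ y hy
    rw [h1, Equiv.Perm.inv_eq_iff_eq]
    by_cases hm : y ∈ O σ i
    · exact ((cycleOf_apply_mem hm).trans h1).symm
    · exact (cycleOf_apply_not_mem hm).symm
  · -- y ∈ orbit
    have h2 : σ y ∈ O σ i := by
      obtain ⟨t, ht⟩ := mem_O_iff.mp hy
      exact mem_O_iff.mpr ⟨t + 1, by rw [iterate_succ_apply', ht]⟩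
    rw [Equiv.Perm.inv_eq_iff_eq]
    exact (cycleOf_apply_mem hy).symm

lemma O_subset_of_permsOn {S : Finset (Fin n)} {σ : Perm (Fin n)} (hσ : σ ∈ PermsOn S)
    {i : Fin n} (hi : i ∈ S) : O σ i ⊆ S := by
  intro y hy
  obtain ⟨t, ht⟩ := mem_O_iff.mp hy
  rw [← ht]
  exact mapsTo_iter (mem_PermsOn.mp hσ) hi t

/-- Reconstruction facts for `σ = c * τ`. -/
lemma recon {B : Finset (Fin n)} {S : Finset (Fin n)} (hBS : B ⊆ S) {i : Fin n} (hi : i ∈ B)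
    {c τ : Perm (Fin n)} (hc : c ∈ CycF B) (hτ : τ ∈ PermsOn (S \ B)) :
    (c * τ) ∈ PermsOn S ∧ O (c * τ) i = B ∧ (c * τ).cycleOf i = c := by
  rw [mem_CycF] at hc
  rw [mem_PermsOn] at hτ
  have hτB : ∀ y ∈ B, τ y = y := fun y hy =>
    hτ y (by rw [Finset.mem_sdiff]; tauto)
  have hτ' : ∀ y, y ∉ B → τ y ∉ B := by
    intro y hy
    by_cases hyS : y ∈ S \ B
    · have := fixes_mapsTo hτ hyS
      rw [Finset.mem_sdiff] at this; exact this.2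
    · rw [hτ y hyS]; exact hy
  have hmem : (c * τ) ∈ PermsOn S := by
    rw [mem_PermsOn]
    intro y hy
    show c (τ y) = y
    rw [hτ y (by rw [Finset.mem_sdiff]; tauto), hc.1 y (fun hB => hy (hBS hB))]
  have hO : O (c * τ) i = B := by
    rw [O_congr (mul_iter_mem hc.1 hτB hi)]
    exact hc.2 i hi
  refine ⟨hmem, hO, ?_⟩
  apply Equiv.ext
  intro y
  by_cases hy : y ∈ B
  · rw [cycleOf_apply_mem (hO ▸ hy : y ∈ O (c * τ) i)]
    show c (τ y) = c y
    rw [hτB y hy]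
  · rw [cycleOf_apply_not_mem (hO ▸ hy : ¬ y ∈ O (c * τ) i)]
    exact (hc.1 y hy).symm


set_option maxHeartbeats 1000000 in
lemma DEC (S : Finset (Fin n)) (i : Fin n) (hi : i ∈ S) (g : Perm (Fin n) → ℍ[ℝ]) :
    ∑ σ ∈ PermsOn S, g σ =
      ∑ B ∈ S.powerset.filter (fun B => i ∈ B), ∑ c ∈ CycF B,
        ∑ τ ∈ PermsOn (S \ B), g (c * τ) := by
  have step : ∀ B ∈ S.powerset.filter (fun B => i ∈ B),
      (∑ c ∈ CycF B, ∑ τ ∈ PermsOn (S \ B), g (c * τ))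
        = ∑ p ∈ CycF B ×ˢ PermsOn (S \ B), g (p.1 * p.2) :=
    fun B _ => (Finset.sum_product (CycF B) (PermsOn (S \ B)) (fun p => g (p.1 * p.2))).symm
  rw [Finset.sum_congr rfl step,
    ← Finset.sum_sigma (S.powerset.filter (fun B => i ∈ B))
      (fun B => CycF B ×ˢ PermsOn (S \ B)) (fun p => g (p.2.1 * p.2.2))]
  refine Finset.sum_nbij'
    (fun σ => (⟨O σ i, (σ.cycleOf i, (σ.cycleOf i)⁻¹ * σ)⟩ :
      Σ _ : Finset (Fin n), Perm (Fin n) × Perm (Fin n)))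
    (fun p => p.2.1 * p.2.2) ?_ ?_ ?_ ?_ ?_
  · intro σ hσ
    rw [Finset.mem_sigma, Finset.mem_filter, Finset.mem_powerset, Finset.mem_product]
    exact ⟨⟨O_subset_of_permsOn hσ hi, self_mem_O σ i⟩,
      cycleOf_mem_CycF σ i, inv_cycleOf_mul_mem S hσ i⟩
  · intro p hp
    rw [Finset.mem_sigma, Finset.mem_filter, Finset.mem_powerset, Finset.mem_product] at hp
    exact (recon hp.1.1 hp.1.2 hp.2.1 hp.2.2).1
  · intro σ hσ
    simp only [mul_inv_cancel_left]
  · intro p hp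
    rw [Finset.mem_sigma, Finset.mem_filter, Finset.mem_powerset, Finset.mem_product] at hp
    obtain ⟨⟨hBS, hiB⟩, hc, hτ⟩ := hp
    obtain ⟨_, hO, hcyc⟩ := recon hBS hiB hc hτ
    refine Sigma.ext hO (heq_of_eq ?_)
    show ((p.snd.1 * p.snd.2).cycleOf i, ((p.snd.1 * p.snd.2).cycleOf i)⁻¹ * (p.snd.1 * p.snd.2)) = p.snd
    rw [hcyc, inv_mul_cancel_left]
  · intro σ hσ
    simp only [mul_inv_cancel_left]


open Equiv Function
variable {n : ℕ}

-- previous chunks as axioms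
lemma isLeaderB_iff {σ : Perm (Fin n)} {x : Fin n} :
    isLeaderB σ x = true ↔ ∀ y ∈ O σ x, x ≤ y := by
  unfold isLeaderB
  rw [List.all_eq_true]
  constructor
  · intro h y hy
    obtain ⟨t, ht, hty⟩ := mem_O_iff_lt.mp hy
    rw [← hty]
    exact decide_eq_true_iff.mp (h t (List.mem_range.mpr ht))
  · intro h t ht
    exact decide_eq_true_iff.mpr (h _ (mem_O_iff.mpr ⟨t, rfl⟩))

lemma inCycleB_iff {σ : Perm (Fin n)} {i x : Fin n} :
    inCycleB σ i x = true ↔ x ∈ O σ i := by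
  unfold inCycleB
  rw [List.any_eq_true]
  constructor
  · rintro ⟨t, _, h⟩
    exact mem_O_iff.mpr ⟨t, decide_eq_true_iff.mp h⟩
  · intro h
    obtain ⟨t, ht, hty⟩ := mem_O_iff_lt.mp h
    exact ⟨t, List.mem_range.mpr ht, decide_eq_true_iff.mpr hty⟩

lemma isLeaderB_congr {σ σ' : Perm (Fin n)} {x : Fin n}
    (h : ∀ t, (⇑σ)^[t] x = (⇑σ')^[t] x) : isLeaderB σ x = isLeaderB σ' x := by
  rw [Bool.eq_iff_iff, isLeaderB_iff, isLeaderB_iff, O_congr h]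

-- sorted filter splitting
lemma filter_split {α : Type*} [LinearOrder α] [DecidableEq α] :
    ∀ (l : List α), l.Pairwise (· < ·) → ∀ (p : α → Bool) (b : α),
    l.filter p = (l.filter fun x => p x && decide (x < b)) ++
      (l.filter fun x => p x && decide (b ≤ x)) := by
  intro l hl p b
  induction l with
  | nil => simp
  | cons a t ih =>
    rw [List.pairwise_cons] at hl
    have iht := ih hl.2
    by_cases pa : p a = true
    · by_cases hab : a < b
      · rw [List.filter_cons_of_pos pa, List.filter_cons_of_pos (by simp [pa, hab]),
          List.filter_cons_of_neg (by simp [pa, not_le.mpr hab]), iht, List.cons_append]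
      · have hba : b ≤ a := not_lt.mp hab
        rw [List.filter_cons_of_pos pa, List.filter_cons_of_neg (by simp [pa, hab]),
          List.filter_cons_of_pos (by simp [pa, hba]), iht]
        have h1 : (t.filter fun x => p x && decide (x < b)) = [] := by
          rw [List.filter_eq_nil_iff]
          intro y hy
          simp only [Bool.and_eq_true, decide_eq_true_iff, not_and]
          intro _
          exact not_lt.mpr (hba.trans (hl.1 y hy).le)
        rw [h1, List.nil_append]
        simp
    · rw [List.filter_cons_of_neg pa, List.filter_cons_of_neg (by simp [pa]),
        List.filter_cons_of_neg (by simp [pa]), iht]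

lemma filter_head {α : Type*} [LinearOrder α] [DecidableEq α] :
    ∀ (l : List α), l.Pairwise (· < ·) → ∀ (p : α → Bool) (b : α), b ∈ l → p b = true →
    (l.filter fun x => p x && decide (b ≤ x)) = b :: (l.filter fun x => p x && decide (b < x)) := by
  intro l hl p b
  induction l with
  | nil => simp
  | cons a t ih =>
    rw [List.pairwise_cons] at hl
    intro hbl pb
    by_cases hab : a = b
    · subst hab
      rw [List.filter_cons_of_pos (by simp [pb]), List.filter_cons_of_neg (by simp)]
      congr 1
      apply List.filter_congr
      intro y hy
      have : a < y := hl.1 y hy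
      simp [this, this.le]
    · have hbt : b ∈ t := by
        rcases List.mem_cons.mp hbl with h | h
        · exact absurd h.symm hab
        · exact h
      have hab' : a < b := hl.1 b hbt
      have hnb : ¬ b < a := not_lt.mpr hab'.le
      have hnb' : ¬ b ≤ a := not_le.mpr hab'
      rw [List.filter_cons_of_neg (by simp [hnb']),
        List.filter_cons_of_neg (by simp [hnb]), ih hl.2 hbt pb]


variable {n : ℕ}

/-- leader predicate and leader list of `τ` inside `S`. -/
noncomputable def pS (S : Finset (Fin n)) (τ : Perm (Fin n)) (x : Fin n) : Bool :=
  isLeaderB τ x && decide (x ∈ S)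

noncomputable def lead (S : Finset (Fin n)) (τ : Perm (Fin n)) : List (Fin n) :=
  (List.finRange n).filter (pS S τ)

lemma pS_iff {S : Finset (Fin n)} {τ : Perm (Fin n)} {x : Fin n} :
    pS S τ x = true ↔ (isLeaderB τ x = true ∧ x ∈ S) := by
  unfold pS
  rw [Bool.and_eq_true, decide_eq_true_iff]

noncomputable def EF (A : Matrix (Fin n) (Fin n) ℍ[ℝ]) (S : Finset (Fin n)) : ℍ[ℝ] :=
  ∑ τ ∈ PermsOn S, sgn τ * ((lead S τ).map (cycProd A τ)).prod

section ctx
variable {S B : Finset (Fin n)} {c τ : Perm (Fin n)}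

lemma tau_fix_B (hτ : τ ∈ PermsOn (S \ B)) : ∀ y ∈ B, τ y = y := fun y hy =>
  mem_PermsOn.mp hτ y (by rw [Finset.mem_sdiff]; tauto)

lemma tau_stable (hτ : τ ∈ PermsOn (S \ B)) : ∀ y, y ∉ B → τ y ∉ B := by
  intro y hy
  by_cases hyS : y ∈ S \ B
  · have := fixes_mapsTo (mem_PermsOn.mp hτ) hyS
    rw [Finset.mem_sdiff] at this; exact this.2
  · rw [mem_PermsOn.mp hτ y hyS]; exact hy

lemma O_mul_mem (hc : c ∈ CycF B) (hτ : τ ∈ PermsOn (S \ B)) {x : Fin n} (hx : x ∈ B) : O (c * τ) x = B := by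
  rw [O_congr (mul_iter_mem (mem_CycF.mp hc).1 (tau_fix_B hτ) hx)]
  exact (mem_CycF.mp hc).2 x hx

lemma leader_b (hBS : B ⊆ S) (hBne : B.Nonempty) (hc : c ∈ CycF B) (hτ : τ ∈ PermsOn (S \ B)) : pS S (c * τ) (B.min' hBne) = true := by
  rw [pS_iff]
  refine ⟨isLeaderB_iff.mpr ?_, hBS (B.min'_mem hBne)⟩
  intro y hy
  rw [O_mul_mem hc hτ (B.min'_mem hBne)] at hy
  exact B.min'_le y hy

lemma pred_eq_off_b (hBne : B.Nonempty) (hc : c ∈ CycF B) (hτ : τ ∈ PermsOn (S \ B)) {x : Fin n} (hx : x ≠ B.min' hBne) :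
    pS S (c * τ) x = pS (S \ B) τ x := by
  unfold pS
  by_cases hxB : x ∈ B
  · have h1 : isLeaderB (c * τ) x = false := by
      rw [Bool.eq_false_iff]
      intro hL
      have h2 := isLeaderB_iff.mp hL (B.min' hBne) (by
        rw [O_mul_mem hc hτ hxB]; exact B.min'_mem hBne)
      exact hx (le_antisymm h2 (B.min'_le x hxB))
    have h2 : decide (x ∈ S \ B) = false := by
      simp [Finset.mem_sdiff, hxB]
    rw [h1, h2]
    simp
  · have h1 : isLeaderB (c * τ) x = isLeaderB τ x :=
      isLeaderB_congr (mul_iter_not_mem (mem_CycF.mp hc).1 (tau_stable hτ) hxB)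
    have h2 : decide (x ∈ S) = decide (x ∈ S \ B) := by
      rw [decide_eq_decide]
      rw [Finset.mem_sdiff]
      tauto
    rw [h1, h2]

lemma lead_split_mul (hBS : B ⊆ S) (hBne : B.Nonempty) (hc : c ∈ CycF B) (hτ : τ ∈ PermsOn (S \ B)) :
    lead S (c * τ) =
      ((List.finRange n).filter fun x => pS (S \ B) τ x && decide (x < B.min' hBne)) ++
      B.min' hBne ::
      ((List.finRange n).filter fun x => pS (S \ B) τ x && decide (B.min' hBne < x)) := by
  set b := B.min' hBne with hb
  unfold lead
  rw [filter_split (List.finRange n) (List.pairwise_lt_finRange n) _ b,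
    filter_head (List.finRange n) (List.pairwise_lt_finRange n) _ b (List.mem_finRange b)
      (leader_b hBS hBne hc hτ)]
  congr 1
  · apply List.filter_congr
    intro x _
    by_cases hxb : x = b
    · subst hxb; simp
    · rw [pred_eq_off_b hBne hc hτ hxb]
  · congr 1
    apply List.filter_congr
    intro x _
    by_cases hxb : x = b
    · subst hxb; simp
    · rw [pred_eq_off_b hBne hc hτ hxb]

lemma lead_split_tau (hBne : B.Nonempty) :
    lead (S \ B) τ =
      ((List.finRange n).filter fun x => pS (S \ B) τ x && decide (x < B.min' hBne)) ++
      ((List.finRange n).filter fun x => pS (S \ B) τ x && decide (B.min' hBne < x)) := by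
  set b := B.min' hBne with hb
  unfold lead
  rw [filter_split (List.finRange n) (List.pairwise_lt_finRange n) _ b]
  congr 1
  apply List.filter_congr
  intro x _
  by_cases hxb : x = b
  · subst hxb
    have : pS (S \ B) τ b = false := by
      unfold pS
      have : ¬ (b ∈ S \ B) := by
        rw [Finset.mem_sdiff]
        push_neg
        intro _
        exact B.min'_mem hBne
      simp [this]
    rw [this]
    simp
  · have hd : decide (b ≤ x) = decide (b < x) := by
      rw [decide_eq_decide]
      exact ⟨fun h => lt_of_le_of_ne h (fun he => hxb he.symm), le_of_lt⟩
    rw [hd]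

lemma map_cycProd_filter_tau (hc : c ∈ CycF B) (hτ : τ ∈ PermsOn (S \ B)) {A : Matrix (Fin n) (Fin n) ℍ[ℝ]} (p : Fin n → Bool) :
    ((List.finRange n).filter fun x => pS (S \ B) τ x && p x).map (cycProd A (c * τ)) =
      ((List.finRange n).filter fun x => pS (S \ B) τ x && p x).map (cycProd A τ) := by
  apply List.map_congr_left
  intro x hx
  rw [List.mem_filter, Bool.and_eq_true] at hx
  have hxB : x ∉ B := fun hB =>
    (Finset.mem_sdiff.mp (pS_iff.mp hx.2.1).2).2 hB
  exact cycProd_congr A (mul_iter_not_mem (mem_CycF.mp hc).1 (tau_stable hτ) hxB)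

end ctx


variable {n : ℕ}

lemma shuffle (c τ : Perm (Fin n)) (x y z : ℍ[ℝ]) :
    sgn (c * τ) * (x * (y * z)) = sgn τ * (x * ((sgn c * y) * z)) := by
  rw [sgn_mul]
  rw [mul_assoc (sgn c) y z, ← mul_assoc x (sgn c) (y * z), ← sgn_comm c x,
    mul_assoc (sgn c) x (y * z),
    show sgn c * sgn τ = sgn τ * sgn c from sgn_comm c (sgn τ), mul_assoc]

lemma coe_pull (r : ℝ) (a b c : ℍ[ℝ]) :
    a * (b * ((r : ℍ[ℝ]) * c)) = (r : ℍ[ℝ]) * (a * (b * c)) := by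
  rw [← mul_assoc b _ c, ← Quaternion.coe_commutes r b, mul_assoc _ b c,
    ← mul_assoc a _ _, ← Quaternion.coe_commutes r a, mul_assoc]

lemma EVAL (A : Matrix (Fin n) (Fin n) ℍ[ℝ]) {S B : Finset (Fin n)} {c τ : Perm (Fin n)}
    (hBS : B ⊆ S) (hBne : B.Nonempty) (hc : c ∈ CycF B) (hτ : τ ∈ PermsOn (S \ B)) :
    sgn (c * τ) * ((lead S (c * τ)).map (cycProd A (c * τ))).prod =
      sgn τ *
        ((((List.finRange n).filter fun x => pS (S \ B) τ x && decide (x < B.min' hBne)).map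
            (cycProd A τ)).prod *
          ((sgn c * cycProd A c (B.min' hBne)) *
            (((List.finRange n).filter fun x => pS (S \ B) τ x && decide (B.min' hBne < x)).map
              (cycProd A τ)).prod)) := by
  rw [lead_split_mul hBS hBne hc hτ]
  rw [List.map_append, List.map_cons, List.prod_append, List.prod_cons]
  rw [map_cycProd_filter_tau hc hτ, map_cycProd_filter_tau hc hτ]
  rw [cycProd_congr A (mul_iter_mem (mem_CycF.mp hc).1 (tau_fix_B hτ) (B.min'_mem hBne))]
  exact shuffle c τ _ _ _

lemma REC (A : Matrix (Fin n) (Fin n) ℍ[ℝ]) (hA : A.IsHermitian) (S : Finset (Fin n))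
    (i : Fin n) (hi : i ∈ S) :
    EF A S = ∑ B ∈ S.powerset.filter (fun B => i ∈ B), TsF A B i * EF A (S \ B) := by
  unfold EF
  rw [DEC S i hi (fun σ => sgn σ * ((lead S σ).map (cycProd A σ)).prod)]
  apply Finset.sum_congr rfl
  intro B hB
  rw [Finset.mem_filter, Finset.mem_powerset] at hB
  obtain ⟨hBS, hiB⟩ := hB
  have hBne : B.Nonempty := ⟨i, hiB⟩
  obtain ⟨r, hr⟩ : ∃ r : ℝ, TsF A B i = (r : ℍ[ℝ]) :=
    ⟨(TsF A B i).re, self_star_eq_re _ (star_TsF A hA B i)⟩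
  have hTb : TsF A B (B.min' hBne) = TsF A B i := TsF_base A hA (B.min'_mem hBne) hiB
  rw [Finset.sum_comm]
  have inner : ∀ τ ∈ PermsOn (S \ B),
      (∑ c ∈ CycF B, sgn (c * τ) * ((lead S (c * τ)).map (cycProd A (c * τ))).prod) =
        TsF A B i * (sgn τ * ((lead (S \ B) τ).map (cycProd A τ)).prod) := by
    intro τ hτ
    rw [Finset.sum_congr rfl (fun c hc => EVAL A hBS hBne hc hτ)]
    rw [← Finset.mul_sum, ← Finset.mul_sum, ← Finset.sum_mul,
      ← TsF_def A B (B.min' hBne), hTb, hr, coe_pull]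
    rw [lead_split_tau hBne, List.map_append, List.prod_append]
  rw [Finset.sum_congr rfl inner, ← Finset.mul_sum, hr]


variable {n : ℕ}

lemma shuffle2 (c τ : Perm (Fin n)) (y z : ℍ[ℝ]) :
    sgn (c * τ) * (y * z) = sgn τ * ((sgn c * y) * z) := by
  rw [sgn_mul, show sgn c * sgn τ = sgn τ * sgn c from sgn_comm c (sgn τ),
    mul_assoc, ← mul_assoc (sgn c) y z]

lemma coe_pull2 (r : ℝ) (a b : ℍ[ℝ]) :
    a * ((r : ℍ[ℝ]) * b) = (r : ℍ[ℝ]) * (a * b) := by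
  rw [← mul_assoc, ← Quaternion.coe_commutes, mul_assoc]

lemma PermsOn_univ : PermsOn (Finset.univ : Finset (Fin n)) = Finset.univ := by
  apply Finset.eq_univ_iff_forall.mpr
  intro σ
  rw [mem_PermsOn]
  intro y hy
  exact absurd (Finset.mem_univ y) hy

lemma PermsOn_empty : PermsOn (∅ : Finset (Fin n)) = {1} := by
  ext σ
  rw [mem_PermsOn, Finset.mem_singleton]
  constructor
  · intro h
    exact Equiv.ext fun y => h y (Finset.notMem_empty y)
  · intro h y _
    rw [h]; rfl

lemma EF_empty (A : Matrix (Fin n) (Fin n) ℍ[ℝ]) : EF A ∅ = 1 := by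
  unfold EF
  rw [PermsOn_empty, Finset.sum_singleton]
  have hl : lead (∅ : Finset (Fin n)) 1 = [] := by
    unfold lead
    rw [List.filter_eq_nil_iff]
    intro x _
    unfold pS
    simp
  rw [hl, sgn_one]
  simp

lemma EF_selfstar (A : Matrix (Fin n) (Fin n) ℍ[ℝ]) (hA : A.IsHermitian)
    (S : Finset (Fin n)) : star (EF A S) = EF A S := by
  induction S using Finset.strongInduction with
  | _ S ih =>
    rcases S.eq_empty_or_nonempty with hS | hS
    · subst hS; rw [EF_empty]; exact star_one _
    · obtain ⟨i, hi⟩ := hS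
      rw [REC A hA S i hi, star_sum]
      apply Finset.sum_congr rfl
      intro B hB
      rw [Finset.mem_filter, Finset.mem_powerset] at hB
      obtain ⟨hBS, hiB⟩ := hB
      have hss : S \ B ⊂ S := Finset.sdiff_ssubset hBS ⟨i, hiB⟩
      obtain ⟨r, hr⟩ : ∃ r : ℝ, TsF A B i = (r : ℍ[ℝ]) :=
        ⟨(TsF A B i).re, self_star_eq_re _ (star_TsF A hA B i)⟩
      rw [hr, StarMul.star_mul, ih _ hss, Quaternion.star_coe]
      exact (Quaternion.coe_commutes r (EF A (S \ B))).symm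

lemma EF_real (A : Matrix (Fin n) (Fin n) ℍ[ℝ]) (hA : A.IsHermitian) (S : Finset (Fin n)) :
    ∃ r : ℝ, EF A S = (r : ℍ[ℝ]) :=
  ⟨(EF A S).re, self_star_eq_re _ (EF_selfstar A hA S)⟩

lemma leaders_eq_lead {B : Finset (Fin n)} {c τ : Perm (Fin n)} {i : Fin n}
    (hiB : i ∈ B) (hc : c ∈ CycF B) (hτ : τ ∈ PermsOn (Finset.univ \ B)) :
    leaders (c * τ) i = lead (Finset.univ \ B) τ := by
  unfold leaders lead
  apply List.filter_congr
  intro x _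
  have hOB : O (c * τ) i = B := O_mul_mem hc hτ hiB
  by_cases hxB : x ∈ B
  · have h1 : inCycleB (c * τ) i x = true := inCycleB_iff.mpr (by rw [hOB]; exact hxB)
    have h2 : pS (Finset.univ \ B) τ x = false := by
      unfold pS
      have : ¬ x ∈ Finset.univ \ B := by rw [Finset.mem_sdiff]; tauto
      simp [this]
    rw [h1, h2]
    simp
  · have h1 : inCycleB (c * τ) i x = false := by
      rw [Bool.eq_false_iff]
      intro h
      exact hxB (hOB ▸ inCycleB_iff.mp h)
    have h2 : isLeaderB (c * τ) x = isLeaderB τ x :=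
      isLeaderB_congr (mul_iter_not_mem (mem_CycF.mp hc).1 (tau_stable hτ) hxB)
    have h3 : decide (x ∈ Finset.univ \ B) = true := by
      simp [Finset.mem_sdiff, hxB]
    unfold pS
    rw [h1, h2, h3]
    simp

lemma map_cycProd_lead {S B : Finset (Fin n)} {c τ : Perm (Fin n)} (hBS' : S ⊆ Finset.univ \ B → True)
    (hc : c ∈ CycF B) (hτ : τ ∈ PermsOn (S \ B)) {A : Matrix (Fin n) (Fin n) ℍ[ℝ]} :
    (lead (S \ B) τ).map (cycProd A (c * τ)) = (lead (S \ B) τ).map (cycProd A τ) := by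
  apply List.map_congr_left
  intro x hx
  rw [lead, List.mem_filter] at hx
  have hxB : x ∉ B := (Finset.mem_sdiff.mp (pS_iff.mp hx.2).2).2
  exact cycProd_congr A (mul_iter_not_mem (mem_CycF.mp hc).1 (tau_stable hτ) hxB)

lemma rdet_eq_EF (A : Matrix (Fin n) (Fin n) ℍ[ℝ]) (hA : A.IsHermitian) (i : Fin n) :
    (∑ σ ∈ PermsOn (Finset.univ : Finset (Fin n)),
      sgn σ * (cycProd A σ i * ((leaders σ i).map (cycProd A σ)).prod)) =
      EF A Finset.univ := by
  rw [DEC Finset.univ i (Finset.mem_univ i), REC A hA Finset.univ i (Finset.mem_univ i)]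
  apply Finset.sum_congr rfl
  intro B hB
  rw [Finset.mem_filter, Finset.mem_powerset] at hB
  obtain ⟨hBS, hiB⟩ := hB
  obtain ⟨r, hr⟩ : ∃ r : ℝ, TsF A B i = (r : ℍ[ℝ]) :=
    ⟨(TsF A B i).re, self_star_eq_re _ (star_TsF A hA B i)⟩
  rw [Finset.sum_comm]
  have inner : ∀ τ ∈ PermsOn (Finset.univ \ B),
      (∑ c ∈ CycF B,
        sgn (c * τ) * (cycProd A (c * τ) i * ((leaders (c * τ) i).map (cycProd A (c * τ))).prod)) =
      TsF A B i * (sgn τ * ((lead (Finset.univ \ B) τ).map (cycProd A τ)).prod) := by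
    intro τ hτ
    have heval : ∀ c ∈ CycF B,
        sgn (c * τ) * (cycProd A (c * τ) i * ((leaders (c * τ) i).map (cycProd A (c * τ))).prod) =
        sgn τ * ((sgn c * cycProd A c i) *
          ((lead (Finset.univ \ B) τ).map (cycProd A τ)).prod) := by
      intro c hc
      rw [leaders_eq_lead hiB hc hτ,
        map_cycProd_lead (fun _ => trivial) hc (by simpa using hτ),
        cycProd_congr A (mul_iter_mem (mem_CycF.mp hc).1 (tau_fix_B (by simpa using hτ)) hiB)]
      exact shuffle2 c τ _ _
    rw [Finset.sum_congr rfl heval, ← Finset.mul_sum, ← Finset.sum_mul,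
      ← TsF_def A B i, hr, coe_pull2]
  rw [Finset.sum_congr rfl inner, ← Finset.mul_sum, hr]
  rfl


variable {n : ℕ}

lemma star_list_prod : ∀ (l : List ℍ[ℝ]), star l.prod = (l.reverse.map star).prod := by
  intro l
  induction l with
  | nil => simp
  | cons a t ih =>
    rw [List.prod_cons, StarMul.star_mul, ih, List.reverse_cons, List.map_append,
      List.prod_append]
    simp

lemma leaders_inv (σ : Perm (Fin n)) (j : Fin n) : leaders σ⁻¹ j = leaders σ j := by
  unfold leaders
  apply List.filter_congr
  intro x _
  have h1 : isLeaderB σ⁻¹ x = isLeaderB σ x := by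
    rw [Bool.eq_iff_iff, isLeaderB_iff, isLeaderB_iff, O_inv]
  have h2 : inCycleB σ⁻¹ j x = inCycleB σ j x := by
    rw [Bool.eq_iff_iff, inCycleB_iff, inCycleB_iff, O_inv]
  rw [h1, h2]

lemma star_rdet_term (A : Matrix (Fin n) (Fin n) ℍ[ℝ]) (hA : A.IsHermitian)
    (σ : Perm (Fin n)) (j : Fin n) :
    star (sgn σ * (cycProd A σ j * ((leaders σ j).map (cycProd A σ)).prod)) =
      sgn σ⁻¹ * ((((leaders σ⁻¹ j).reverse).map (cycProd A σ⁻¹)).prod * cycProd A σ⁻¹ j) := by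
  have hP : star ((leaders σ j).map (cycProd A σ)).prod =
      (((leaders σ⁻¹ j).reverse).map (cycProd A σ⁻¹)).prod := by
    rw [star_list_prod, ← List.map_reverse, List.map_map, leaders_inv]
    congr 1
    apply List.map_congr_left
    intro x _
    exact star_cycProd A hA σ x
  rw [StarMul.star_mul, StarMul.star_mul, star_sgn, star_cycProd A hA, hP, ← sgn_comm,
    sgn_inv]

lemma star_rdet (A : Matrix (Fin n) (Fin n) ℍ[ℝ]) (hA : A.IsHermitian) (j : Fin n) :
    star (∑ σ : Perm (Fin n), sgn σ * (cycProd A σ j * ((leaders σ j).map (cycProd A σ)).prod)) =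
      ∑ τ : Perm (Fin n), sgn τ * ((((leaders τ j).reverse).map (cycProd A τ)).prod * cycProd A τ j) := by
  rw [star_sum]
  refine Finset.sum_nbij' (fun σ => σ⁻¹) (fun σ => σ⁻¹) ?_ ?_ ?_ ?_ ?_
  · intro σ _; exact Finset.mem_univ _
  · intro σ _; exact Finset.mem_univ _
  · intro σ _; simp
  · intro σ _; simp
  · intro σ _
    rw [star_rdet_term A hA σ j]


end Stmt0Aux

/-- for a Hermitian quaternion matrix all row determinants and all
column determinants coincide, and the common value is real. -/
theorem stmt0 {n : ℕ} (A : Matrix (Fin n) (Fin n) ℍ[ℝ]) (hA : A.IsHermitian) :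
    (∀ i j : Fin n, rdet A i = rdet A j) ∧
    (∀ i j : Fin n, cdet A i = cdet A j) ∧
    (∀ i j : Fin n, rdet A i = cdet A j) ∧
    (∀ i : Fin n, ∃ r : ℝ, rdet A i = (r : ℍ[ℝ])) := by
  have hrd : ∀ i : Fin n, rdet A i = Stmt0Aux.EF A Finset.univ := by
    intro i
    have h := Stmt0Aux.rdet_eq_EF A hA i
    rw [Stmt0Aux.PermsOn_univ] at h
    exact h
  obtain ⟨r, hr⟩ := Stmt0Aux.EF_real A hA Finset.univ
  have hcd : ∀ j : Fin n, cdet A j = Stmt0Aux.EF A Finset.univ := by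
    intro j
    have h2 : cdet A j = star (rdet A j) := (Stmt0Aux.star_rdet A hA j).symm
    rw [h2, hrd j, hr, Quaternion.star_coe, ← hr]
  exact ⟨fun i j => by rw [hrd i, hrd j], fun i j => by rw [hcd i, hcd j],
    fun i j => by rw [hrd i, hcd j], fun i => ⟨r, by rw [hrd i, hr]⟩⟩
end

section
/- Let A be an n×n matrix over ℍ and b ∈ ℍ. For every i ∈ {1,…,n}, the i-th row determinant of the matrix obtained from A by replacing its i-th row a_{i.} with the left scalar multiple b·a_{i.} equals b · rdet_i A; that is, rdet_i A_{i.}(b·a_{i.}) = b · rdet_i A. -/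
open Quaternion Matrix Finset

section Aux

variable {n : ℕ}

lemma perm_periodic (σ : Equiv.Perm (Fin n)) (x : Fin n) :
    x ∈ Function.periodicPts ⇑σ := by
  refine ⟨orderOf σ, ?_, ?_⟩
  · exact orderOf_pos σ
  · show (⇑σ)^[orderOf σ] x = x
    simp [Equiv.Perm.iterate_eq_pow, pow_orderOf_eq_one]

lemma period_pos (σ : Equiv.Perm (Fin n)) (x : Fin n) :
    0 < Function.minimalPeriod ⇑σ x :=
  Function.minimalPeriod_pos_of_mem_periodicPts (perm_periodic σ x)

lemma period_le (σ : Equiv.Perm (Fin n)) (x : Fin n) :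
    Function.minimalPeriod ⇑σ x ≤ n := by
  classical
  have hinj := Function.iterate_injOn_Iio_minimalPeriod (f := ⇑σ) (x := x)
  have : (Finset.range (Function.minimalPeriod ⇑σ x)).card ≤
      (Finset.univ : Finset (Fin n)).card := by
    apply Finset.card_le_card_of_injOn (fun t => (⇑σ)^[t] x)
    · intro a _; exact Finset.mem_univ _
    · intro a ha b hb hab
      exact hinj (by simpa using Finset.mem_range.mp ha)
        (by simpa using Finset.mem_range.mp hb) hab
  simpa using this

lemma sameCycle_of_iterate {σ : Equiv.Perm (Fin n)} {x y : Fin n} {t : ℕ}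
    (h : (⇑σ)^[t] x = y) : σ.SameCycle x y :=
  ⟨(t : ℤ), by rw [zpow_natCast]; simpa [Equiv.Perm.iterate_eq_pow] using h⟩

lemma inCycleB_iff {σ : Equiv.Perm (Fin n)} {i x : Fin n} :
    inCycleB σ i x = true ↔ σ.SameCycle i x := by
  constructor
  · intro h
    obtain ⟨t, _, ht⟩ := by simpa [inCycleB, List.any_eq_true] using h
    exact sameCycle_of_iterate ht
  · intro h
    obtain ⟨k, -, hk⟩ := h.exists_pow_eq'
    have hiter : (⇑σ)^[k % Function.minimalPeriod ⇑σ i] i = x := by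
      rw [Function.iterate_mod_minimalPeriod_eq]
      simpa [Equiv.Perm.iterate_eq_pow] using hk
    have hlt : k % Function.minimalPeriod ⇑σ i < n :=
      lt_of_lt_of_le (Nat.mod_lt _ (period_pos σ i)) (period_le σ i)
    simp only [inCycleB, List.any_eq_true, List.mem_range]
    exact ⟨_, hlt, by simpa using hiter⟩

lemma cycProd_update_ne (A : Matrix (Fin n) (Fin n) ℍ[ℝ]) (f : Fin n → ℍ[ℝ])
    (σ : Equiv.Perm (Fin n)) {i x : Fin n} (h : ¬ σ.SameCycle i x) :
    cycProd (A.updateRow i f) σ x = cycProd A σ x := by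
  unfold cycProd
  congr 1
  apply List.map_congr_left
  intro t _
  have hne : (⇑σ)^[t] x ≠ i := by
    intro he
    exact h ((sameCycle_of_iterate he).symm)
  rw [Matrix.updateRow_ne hne]

lemma cycProd_update_self (A : Matrix (Fin n) (Fin n) ℍ[ℝ]) (b : ℍ[ℝ])
    (σ : Equiv.Perm (Fin n)) (i : Fin n) :
    cycProd (A.updateRow i fun t => b * A i t) σ i = b * cycProd A σ i := by
  unfold cycProd
  obtain ⟨m, hm⟩ := Nat.exists_eq_add_of_lt (period_pos σ i)
  rw [zero_add] at hm
  have hrest : ∀ t ∈ List.range m,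
      (A.updateRow i fun t => b * A i t) ((⇑σ)^[t + 1] i) ((⇑σ)^[t + 1 + 1] i)
        = A ((⇑σ)^[t + 1] i) ((⇑σ)^[t + 1 + 1] i) := by
    intro t ht
    have ht' := List.mem_range.mp ht
    have htm : t + 1 < Function.minimalPeriod ⇑σ i := by
      rw [hm]; omega
    have hne : (⇑σ)^[t + 1] i ≠ i := by
      intro he
      have : Function.minimalPeriod ⇑σ i ∣ (t + 1) :=
        Function.IsPeriodicPt.minimalPeriod_dvd he
      have := Nat.le_of_dvd (Nat.succ_pos t) this
      omega
    rw [Matrix.updateRow_ne hne]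
  rw [hm, List.range_succ_eq_map]
  simp only [List.map_cons, List.map_map, List.prod_cons]
  have h0 : (A.updateRow i fun t => b * A i t) ((⇑σ)^[0] i) ((⇑σ)^[0 + 1] i)
      = b * A ((⇑σ)^[0] i) ((⇑σ)^[0 + 1] i) := by
    simp [Matrix.updateRow_self]
  rw [h0, mul_assoc]
  congr 2
  apply congrArg List.prod
  apply List.map_congr_left
  intro t ht
  simpa [Function.comp, Nat.succ_eq_add_one] using hrest t ht

lemma leaders_not_sameCycle {σ : Equiv.Perm (Fin n)} {i x : Fin n}
    (hx : x ∈ leaders σ i) : ¬ σ.SameCycle i x := by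
  simp only [leaders, List.mem_filter, Bool.and_eq_true, Bool.not_eq_true'] at hx
  intro h
  have h2 := hx.2.2
  rw [inCycleB_iff.mpr h] at h2
  simp at h2

end Aux


/-- `rdet_i A_{i.}(b·a_{i.}) = b · rdet_i A`. -/
theorem stmt1 {n : ℕ} (A : Matrix (Fin n) (Fin n) ℍ[ℝ]) (b : ℍ[ℝ]) (i : Fin n) :
    rdet (A.updateRow i fun t => b * A i t) i = b * rdet A i := by
  unfold rdet
  rw [Finset.mul_sum]
  apply Finset.sum_congr rfl
  intro σ _
  rw [cycProd_update_self]
  have hl : ((leaders σ i).map (cycProd (A.updateRow i fun t => b * A i t) σ)).prod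
      = ((leaders σ i).map (cycProd A σ)).prod := by
    congr 1
    apply List.map_congr_left
    intro x hx
    exact cycProd_update_ne A _ σ (leaders_not_sameCycle hx)
  rw [hl]
  have hc : Commute ((Equiv.Perm.sign σ : ℤ) : ℍ[ℝ]) b := (Int.cast_commute _ _)
  simp only [← mul_assoc, hc.eq]
end
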